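/- If the norm ν on E is order continuous, then ι(x) = ρ(x) for every x ∈ G, and moreover ρ(y) = ν(y) for every y ∈ E. -/

import Mathlib

theorem stmt2
    {G : Type*} [Lattice G] [AddCommGroup G] [Module ℝ G]
    [CovariantClass G G (· + ·) (· ≤ ·)] [PosSMulMono ℝ G]
    (arch : ∀ x y : G, (∀ n : ℕ, n • x ≤ y) → x ≤ 0)
    (E : Set G)
    (hE0 : (0 : G) ∈ E)
    (hEadd : ∀ x ∈ E, ∀ y ∈ E, x + y ∈ E)
    (hEsmul : ∀ (c : ℝ), ∀ x ∈ E, c • x ∈ E)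
    (hEsup : ∀ x ∈ E, ∀ y ∈ E, x ⊔ y ∈ E)
    (hEinf : ∀ x ∈ E, ∀ y ∈ E, x ⊓ y ∈ E)
    (hdense : ∀ x : G, 0 < x → ∃ y ∈ E, 0 < y ∧ y ≤ x)
    (hmaj : ∀ x : G, ∃ y ∈ E, x ≤ y)
    (ν : G → ℝ)
    (hν_zero : ∀ x ∈ E, (ν x = 0 ↔ x = 0))
    (hν_smul : ∀ (c : ℝ), ∀ x ∈ E, ν (c • x) = |c| * ν x)
    (hν_add : ∀ x ∈ E, ∀ y ∈ E, ν (x + y) ≤ ν x + ν y)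
    (hν_mono : ∀ x ∈ E, ∀ y ∈ E, |x| ≤ |y| → ν x ≤ ν y)
    (ρ : G → ℝ)
    (hρ : ∀ x : G, ρ x = sSup (ν '' {z | z ∈ E ∧ 0 ≤ z ∧ z ≤ |x|}))
    (ι : G → ℝ)
    (hι : ∀ x : G, ι x = sInf (ν '' {y | y ∈ E ∧ |x| ≤ y}))
    (hoc : ∀ D : Set G, D.Nonempty → D ⊆ E → (∀ d ∈ D, 0 ≤ d) →
      DirectedOn (· ≥ ·) D → IsGLB D 0 → sInf (ν '' D) = 0)
    :
    (∀ x : G, ι x = ρ x) ∧ (∀ y ∈ E, ρ y = ν y) := by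
  -- basic facts about ν and E
  have hν0 : ν 0 = 0 := by
    have h := hν_smul 0 0 hE0
    simpa using h
  have hνpos : ∀ y ∈ E, 0 ≤ ν y := by
    intro y hy
    have h := hν_mono 0 hE0 y hy (by simpa using abs_nonneg y)
    rwa [hν0] at h
  have hEneg : ∀ x ∈ E, -x ∈ E := by
    intro x hx
    have h := hEsmul (-1) x hx
    rwa [neg_one_smul] at h
  have hEsub : ∀ x ∈ E, ∀ y ∈ E, x - y ∈ E := by
    intro x hx y hy
    have h := hEadd x hx (-y) (hEneg y hy)
    rwa [← sub_eq_add_neg] at h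
  have habsE : ∀ x ∈ E, |x| ∈ E := by
    intro x hx
    rw [abs]
    exact hEsup x hx (-x) (hEneg x hx)
  have hEnsmul : ∀ e ∈ E, ∀ n : ℕ, n • e ∈ E := by
    intro e he n
    induction n with
    | zero => simpa using hE0
    | succ n ih => rw [succ_nsmul]; exact hEadd _ ih e he
  -- key lemma: supremum from below
  have lub : ∀ x : G, 0 ≤ x → IsLUB {z : G | z ∈ E ∧ 0 ≤ z ∧ z ≤ x} x := by
    intro x hx
    constructor
    · rintro z ⟨_, _, hz⟩; exact hz
    · intro u hu
      by_contra hxu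
      have hlt : x ⊓ u < x :=
        lt_of_le_of_ne inf_le_left (fun he => hxu (he ▸ inf_le_right))
      obtain ⟨e, heE, hepos, hele⟩ := hdense (x - x ⊓ u) (sub_pos.mpr hlt)
      have key : ∀ n : ℕ, n • e ≤ x := by
        intro n
        induction n with
        | zero => simpa using hx
        | succ n ih =>
          have hmem : n • e ∈ {z : G | z ∈ E ∧ 0 ≤ z ∧ z ≤ x} := by
            refine ⟨hEnsmul e heE n, ?_, ih⟩
            have h0 : (0 : G) = n • (0 : G) := by simp
            rw [h0]
            exact nsmul_le_nsmul_right hepos.le n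
          have h1 : n • e ≤ x ⊓ u := le_inf ih (hu hmem)
          calc (n + 1) • e = n • e + e := succ_nsmul e n
            _ ≤ x ⊓ u + (x - x ⊓ u) := add_le_add h1 hele
            _ = x := by abel
      exact absurd (arch e x key) (hepos.not_ge)
  -- key lemma: infimum from above
  have glb : ∀ x : G, 0 ≤ x → IsGLB {y : G | y ∈ E ∧ x ≤ y} x := by
    intro x hx
    constructor
    · rintro y ⟨_, hy⟩; exact hy
    · intro b hb
      by_contra hbx
      have hcb : ∀ y ∈ {y : G | y ∈ E ∧ x ≤ y}, b ⊔ x ≤ y :=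
        fun y hy => sup_le (hb hy) hy.2
      have hlt : x < b ⊔ x :=
        lt_of_le_of_ne le_sup_right (fun he => hbx (he ▸ le_sup_left))
      obtain ⟨e, heE, hepos, hele⟩ := hdense (b ⊔ x - x) (sub_pos.mpr hlt)
      obtain ⟨y₀, hy₀E, hy₀⟩ := hmaj x
      have key : ∀ n : ℕ, y₀ - n • e ∈ {y : G | y ∈ E ∧ x ≤ y} := by
        intro n
        induction n with
        | zero => simpa using ⟨hy₀E, hy₀⟩
        | succ n ih =>
          refine ⟨hEsub y₀ hy₀E _ (hEnsmul e heE (n + 1)), ?_⟩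
          have hc : b ⊔ x ≤ y₀ - n • e := hcb _ ih
          have h1 : x + e ≤ y₀ - n • e := by
            calc x + e ≤ x + (b ⊔ x - x) := add_le_add_right hele x
              _ = b ⊔ x := by abel
              _ ≤ y₀ - n • e := hc
          rw [succ_nsmul]
          have h2 := sub_le_sub_right h1 e
          calc x = x + e - e := by abel
            _ ≤ y₀ - n • e - e := h2
            _ = y₀ - (n • e + e) := by abel
      have harch : ∀ n : ℕ, n • e ≤ y₀ - x := by
        intro n
        have h := (key n).2
        have h' := add_le_add_left h (n • e - x)
        calc n • e = x + (n • e - x) := by abel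
          _ ≤ y₀ - n • e + (n • e - x) := h'
          _ = y₀ - x := by abel
      exact absurd (arch e (y₀ - x) harch) (hepos.not_ge)
  -- sets
  set S : G → Set G := fun x => {z : G | z ∈ E ∧ 0 ≤ z ∧ z ≤ |x|} with hS
  set T : G → Set G := fun x => {y : G | y ∈ E ∧ |x| ≤ y} with hT
  have hSne : ∀ x : G, (0 : G) ∈ S x := fun x => ⟨hE0, le_refl _, abs_nonneg x⟩
  have hTne : ∀ x : G, ∃ y₀, y₀ ∈ T x := by
    intro x
    obtain ⟨y₀, hy₀E, hy₀⟩ := hmaj |x|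
    exact ⟨y₀, hy₀E, hy₀⟩
  have hνST : ∀ x : G, ∀ z ∈ S x, ∀ y ∈ T x, ν z ≤ ν y := by
    intro x z hz y hy
    refine hν_mono z hz.1 y hy.1 ?_
    have h0y : (0 : G) ≤ y := le_trans (abs_nonneg x) hy.2
    rw [abs_of_nonneg hz.2.1, abs_of_nonneg h0y]
    exact le_trans hz.2.2 hy.2
  have hbddS : ∀ x : G, BddAbove (ν '' S x) := by
    intro x
    obtain ⟨y₀, hy₀⟩ := hTne x
    exact ⟨ν y₀, by rintro _ ⟨z, hz, rfl⟩; exact hνST x z hz y₀ hy₀⟩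
  have hbddT : ∀ x : G, BddBelow (ν '' T x) := by
    intro x
    exact ⟨0, by rintro _ ⟨y, hy, rfl⟩; exact hνpos y hy.1⟩
  have hSneIm : ∀ x : G, (ν '' S x).Nonempty := fun x => ⟨ν 0, 0, hSne x, rfl⟩
  have hTneIm : ∀ x : G, (ν '' T x).Nonempty := by
    intro x; obtain ⟨y₀, hy₀⟩ := hTne x; exact ⟨ν y₀, y₀, hy₀, rfl⟩
  -- ρ ≤ ι
  have hρι : ∀ x : G, ρ x ≤ ι x := by
    intro x
    rw [hρ, hι]
    refine csSup_le (hSneIm x) ?_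
    rintro _ ⟨z, hz, rfl⟩
    refine le_csInf (hTneIm x) ?_
    rintro _ ⟨y, hy, rfl⟩
    exact hνST x z hz y hy
  -- the difference set
  have main : ∀ x : G, ι x ≤ ρ x := by
    intro x
    set D : Set G := {d : G | ∃ y ∈ T x, ∃ z ∈ S x, d = y - z} with hD
    obtain ⟨y₀, hy₀⟩ := hTne x
    have hDne : D.Nonempty := ⟨y₀ - 0, y₀, hy₀, 0, hSne x, rfl⟩
    have hDE : D ⊆ E := by
      rintro _ ⟨y, hy, z, hz, rfl⟩
      exact hEsub y hy.1 z hz.1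
    have hDpos : ∀ d ∈ D, 0 ≤ d := by
      rintro _ ⟨y, hy, z, hz, rfl⟩
      exact sub_nonneg.mpr (le_trans hz.2.2 hy.2)
    have hDdir : DirectedOn (· ≥ ·) D := by
      rintro _ ⟨y₁, hy₁, z₁, hz₁, rfl⟩ _ ⟨y₂, hy₂, z₂, hz₂, rfl⟩
      refine ⟨y₁ ⊓ y₂ - z₁ ⊔ z₂, ⟨y₁ ⊓ y₂, ⟨hEinf y₁ hy₁.1 y₂ hy₂.1, le_inf hy₁.2 hy₂.2⟩,
        z₁ ⊔ z₂, ⟨hEsup z₁ hz₁.1 z₂ hz₂.1, le_trans hz₁.2.1 le_sup_left,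
          sup_le hz₁.2.2 hz₂.2.2⟩, rfl⟩, ?_, ?_⟩
      · exact sub_le_sub inf_le_left le_sup_left
      · exact sub_le_sub inf_le_right le_sup_right
    have hDglb : IsGLB D 0 := by
      constructor
      · intro d hd; exact hDpos d hd
      · intro b hb
        have hTb : ∀ y ∈ T x, b + |x| ≤ y := by
          intro y hy
          have hSb : ∀ z ∈ S x, z ≤ y - b := by
            intro z hz
            have := hb ⟨y, hy, z, hz, rfl⟩
            calc z = y - (y - z) := by abel
              _ ≤ y - b := sub_le_sub_left this y
          have := (lub |x| (abs_nonneg x)).2 hSb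
          calc b + |x| ≤ b + (y - b) := add_le_add_right this b
            _ = y := by abel
        have := (glb |x| (abs_nonneg x)).2 hTb
        calc b = b + |x| - |x| := by abel
          _ ≤ |x| - |x| := sub_le_sub_right this |x|
          _ = 0 := by abel
    have hinf0 : sInf (ν '' D) = 0 := hoc D hDne hDE hDpos hDdir hDglb
    have hle : ι x - ρ x ≤ sInf (ν '' D) := by
      refine le_csInf (hDne.image ν) ?_
      rintro _ ⟨d, ⟨y, hy, z, hz, rfl⟩, rfl⟩
      have h1 : ι x ≤ ν y := by
        rw [hι]
        exact csInf_le (hbddT x) ⟨y, hy, rfl⟩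
      have h2 : ν z ≤ ρ x := by
        rw [hρ]
        exact le_csSup (hbddS x) ⟨z, hz, rfl⟩
      have h3 : ν y ≤ ν z + ν (y - z) := by
        have h4 := hν_add z hz.1 (y - z) (hEsub y hy.1 z hz.1)
        have h5 : z + (y - z) = y := by abel
        rwa [h5] at h4
      linarith
    linarith [hinf0 ▸ hle]
  refine ⟨fun x => le_antisymm (main x) (hρι x), ?_⟩
  -- ρ = ν on E
  intro y hy
  have hννabs : ν |y| = ν y := by
    refine le_antisymm (hν_mono _ (habsE y hy) y hy ?_) (hν_mono y hy _ (habsE y hy) ?_)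
    · rw [abs_abs]
    · rw [abs_abs]
  rw [hρ]
  refine le_antisymm ?_ ?_
  · refine csSup_le (hSneIm y) ?_
    rintro _ ⟨z, hz, rfl⟩
    refine hν_mono z hz.1 y hy ?_
    rw [abs_of_nonneg hz.2.1]
    exact hz.2.2
  · rw [← hννabs]
    exact le_csSup (hbddS y) ⟨|y|, ⟨habsE y hy, abs_nonneg y, le_refl _⟩, rfl⟩
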